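/- Occam's razor generalization bound: under the T-fold product measure D^⊗T on X^T (i.i.d. sampling), the probability of the event that for every hypothesis h ∈ H, |L(h) − L̂(h, x)| ≤ b·√((−log P_H(h) + log(2/δ))/(2T)) is at least 1 − δ. -/

import Mathlib

open scoped Classical

/-- Occam's razor generalization bound: under the `T`-fold product measure on `X^T`
(i.i.d. sampling from the data-generating distribution `D`), the probability of the
event that for every hypothesis `h ∈ H`,
`|L(h) - L̂(h, x)| ≤ b * √((-log (P_H h) + log (2/δ)) / (2T))`
is at least `1 - δ`.  Here `L h = ∑ x, D x * L x h` is the expected loss and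
`L̂ h x = (1/T) * ∑ t, L (x t) h` is the empirical loss of the sample `x : Fin T → X`,
whose probability under i.i.d. sampling is `∏ t, D (x t)`. -/

lemma hoeffding_scalar {p : ℝ} (hp0 : 0 ≤ p) (hp1 : p ≤ 1) (u : ℝ) :
    Real.log (1 - p + p * Real.exp u) - p * u ≤ u ^ 2 / 8 := by
  set A : ℝ → ℝ := fun v => 1 - p + p * Real.exp v with hA
  have hApos : ∀ v, 0 < A v := by
    intro v
    have he := Real.exp_pos v
    have : 0 ≤ p * Real.exp v := by positivity
    simp only [hA]
    rcases eq_or_lt_of_le hp1 with h | h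
    · rw [← h]; nlinarith
    · nlinarith
  set φ : ℝ → ℝ := fun v => v / 4 - (p * Real.exp v / A v - p) with hφ
  set g : ℝ → ℝ := fun v => v ^ 2 / 8 - (Real.log (A v) - p * v) with hg
  have hg0 : g 0 = 0 := by simp [hg, hA]
  have hderivA : ∀ v, HasDerivAt A (p * Real.exp v) v := by
    intro v
    exact ((Real.hasDerivAt_exp v).const_mul p).const_add (1 - p)
  have hderivg : ∀ v, HasDerivAt g (φ v) v := by
    intro v
    have h1 : HasDerivAt (fun v => Real.log (A v)) (p * Real.exp v / A v) v :=
      (hderivA v).log (ne_of_gt (hApos v))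
    have h2 : HasDerivAt (fun v : ℝ => v ^ 2 / 8) (v / 4) v := by
      have := (hasDerivAt_pow 2 v).div_const 8
      exact this.congr_deriv (by norm_num; ring)
    have h3 : HasDerivAt (fun v : ℝ => p * v) p v := by
      simpa using (hasDerivAt_id v).const_mul p
    exact h2.sub (h1.sub h3)
  have hderivφ : ∀ v, HasDerivAt φ (1 / 4 - p * Real.exp v * (1 - p) / (A v) ^ 2) v := by
    intro v
    have h1 : HasDerivAt (fun v => p * Real.exp v) (p * Real.exp v) v :=
      (Real.hasDerivAt_exp v).const_mul p
    have h2 : HasDerivAt (fun v => p * Real.exp v / A v)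
        ((p * Real.exp v * A v - p * Real.exp v * (p * Real.exp v)) / (A v) ^ 2) v :=
      h1.div (hderivA v) (ne_of_gt (hApos v))
    have h3 : HasDerivAt (fun v : ℝ => v / 4) (1 / 4) v := by
      simpa using (hasDerivAt_id v).div_const 4
    have h4 := h3.sub (h2.sub (hasDerivAt_const v p))
    have hAv : A v = 1 - p + p * Real.exp v := rfl
    refine h4.congr_deriv ?_
    rw [hAv]; ring
  have hφmono : Monotone φ := by
    apply monotone_of_deriv_nonneg (fun v => (hderivφ v).differentiableAt)
    intro v
    have hAv : A v = 1 - p + p * Real.exp v := rfl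
    have hApos' := hApos v
    rw [hAv] at hApos'
    rw [(hderivφ v).deriv, hAv]
    have h1 : 0 < (1 - p + p * Real.exp v) ^ 2 := pow_pos hApos' 2
    rw [sub_nonneg, div_le_iff₀ h1]
    nlinarith [sq_nonneg (1 - p - p * Real.exp v)]
  have hφ0 : φ 0 = 0 := by simp [hφ, hA]
  have hgnn : ∀ v, 0 ≤ g v := by
    intro v
    have hdiff : Differentiable ℝ g := fun v => (hderivg v).differentiableAt
    rcases le_total 0 v with h | h
    · have hmono : MonotoneOn g (Set.Ici 0) := by
        apply monotoneOn_of_deriv_nonneg (convex_Ici 0) hdiff.continuous.continuousOn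
          hdiff.differentiableOn
        intro x hx
        rw [(hderivg x).deriv]
        rw [interior_Ici] at hx
        have := hφmono (le_of_lt hx)
        rw [hφ0] at this; exact this
      have := hmono (Set.self_mem_Ici) (Set.mem_Ici.2 h) h
      rwa [hg0] at this
    · have hanti : AntitoneOn g (Set.Iic 0) := by
        apply antitoneOn_of_deriv_nonpos (convex_Iic 0) hdiff.continuous.continuousOn
          hdiff.differentiableOn
        intro x hx
        rw [(hderivg x).deriv]
        rw [interior_Iic] at hx
        have := hφmono (le_of_lt hx)
        rw [hφ0] at this; exact this
      have := hanti (Set.mem_Iic.2 h) (Set.self_mem_Iic) h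
      rwa [hg0] at this
  have := hgnn u
  simp only [hg, hA] at this
  linarith

lemma hoeffding_mgf {X : Type*} [Fintype X] (D : X → ℝ) (hDnn : ∀ x, 0 ≤ D x)
    (hDsum : ∑ x, D x = 1) (b : ℝ) (hb : 0 < b) (Y : X → ℝ)
    (hY0 : ∀ x, 0 ≤ Y x) (hY1 : ∀ x, Y x ≤ b) (l : ℝ) :
    ∑ x, D x * Real.exp (l * (Y x - ∑ x', D x' * Y x')) ≤ Real.exp (l ^ 2 * b ^ 2 / 8) := by
  set μ := ∑ x', D x' * Y x' with hμ
  have hμ0 : 0 ≤ μ := Finset.sum_nonneg fun x _ => mul_nonneg (hDnn x) (hY0 x)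
  have hμb : μ ≤ b := by
    calc μ ≤ ∑ x, D x * b := Finset.sum_le_sum fun x _ =>
            mul_le_mul_of_nonneg_left (hY1 x) (hDnn x)
    _ = b := by rw [← Finset.sum_mul, hDsum, one_mul]
  set p := μ / b with hp
  have hp0 : 0 ≤ p := div_nonneg hμ0 hb.le
  have hp1 : p ≤ 1 := (div_le_one hb).2 hμb
  set E := Real.exp (l * b) with hE
  have key : ∀ x, Real.exp (l * Y x) ≤ (1 - Y x / b) + Y x / b * E := by
    intro x
    have ht0 : 0 ≤ Y x / b := div_nonneg (hY0 x) hb.le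
    have ht1 : 1 - Y x / b ≥ 0 := by
      have := (div_le_one hb).2 (hY1 x); linarith
    have hcx := convexOn_exp.2 (Set.mem_univ (0 : ℝ)) (Set.mem_univ (l * b))
      ht1 ht0 (by ring)
    simp only [smul_eq_mul, mul_zero, Real.exp_zero, mul_one] at hcx
    have harg : Y x / b * (l * b) = l * Y x := by
      field_simp
    rwa [zero_add, harg, ← hE] at hcx
  have hsum1 : ∑ x, D x * (Y x / b) = p := by
    rw [hp, hμ, Finset.sum_div]
    exact Finset.sum_congr rfl fun x _ => (mul_div_assoc _ _ _).symm
  have hsumE : ∑ x, D x * Real.exp (l * Y x) ≤ 1 - p + p * E := by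
    calc ∑ x, D x * Real.exp (l * Y x)
        ≤ ∑ x, D x * ((1 - Y x / b) + Y x / b * E) :=
          Finset.sum_le_sum fun x _ => mul_le_mul_of_nonneg_left (key x) (hDnn x)
      _ = ∑ x, (D x - D x * (Y x / b) + D x * (Y x / b) * E) :=
          Finset.sum_congr rfl fun x _ => by ring
      _ = 1 - p + p * E := by
          rw [Finset.sum_add_distrib, Finset.sum_sub_distrib, hDsum, ← Finset.sum_mul, hsum1]
  have hApos : 0 < 1 - p + p * E := by
    have hEpos : 0 < E := Real.exp_pos _
    rcases eq_or_lt_of_le hp1 with h | h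
    · rw [← h]; nlinarith
    · nlinarith
  calc ∑ x, D x * Real.exp (l * (Y x - μ))
      = Real.exp (-(l * μ)) * ∑ x, D x * Real.exp (l * Y x) := by
        rw [Finset.mul_sum]
        refine Finset.sum_congr rfl fun x _ => ?_
        rw [show l * (Y x - μ) = l * Y x + -(l * μ) by ring, Real.exp_add]
        ring
    _ ≤ Real.exp (-(l * μ)) * (1 - p + p * E) := by
        apply mul_le_mul_of_nonneg_left hsumE (Real.exp_pos _).le
    _ = Real.exp (Real.log (1 - p + p * E) - p * (l * b)) := by
        rw [Real.exp_sub, Real.exp_log hApos]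
        have : p * (l * b) = l * μ := by rw [hp]; field_simp
        rw [this, Real.exp_neg]; ring
    _ ≤ Real.exp (l ^ 2 * b ^ 2 / 8) := by
        apply Real.exp_le_exp.2
        have := hoeffding_scalar hp0 hp1 (l * b)
        calc Real.log (1 - p + p * E) - p * (l * b) ≤ (l * b) ^ 2 / 8 := this
          _ = l ^ 2 * b ^ 2 / 8 := by ring

lemma chernoff_upper {X : Type*} [Fintype X] (D : X → ℝ) (hDnn : ∀ x, 0 ≤ D x)
    (hDsum : ∑ x, D x = 1) (b : ℝ) (hb : 0 < b) (Y : X → ℝ)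
    (hY0 : ∀ x, 0 ≤ Y x) (hY1 : ∀ x, Y x ≤ b) (T : ℕ) (ε : ℝ) (hε : 0 < ε) :
    ∑ x ∈ Finset.univ.filter (fun x : Fin T → X =>
        (T : ℝ) * (∑ x', D x' * Y x') + T * ε ≤ ∑ t, Y (x t)), ∏ t, D (x t) ≤
      Real.exp (-2 * T * ε ^ 2 / b ^ 2) := by
  set μ := ∑ x', D x' * Y x' with hμ
  set l : ℝ := 4 * ε / b ^ 2 with hl
  have hl0 : 0 < l := by positivity
  set S : (Fin T → X) → ℝ := fun x => ∑ t, Y (x t) with hS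
  have hS' : ∀ x, S x = ∑ t, Y (x t) := fun _ => rfl
  clear_value μ l S
  simp only [← hS']
  have step1 : ∀ x : Fin T → X,
      x ∈ Finset.univ.filter (fun x : Fin T → X => (T : ℝ) * μ + T * ε ≤ S x) →
      ∏ t, D (x t) ≤ (∏ t, D (x t)) * Real.exp (l * (S x - T * μ - T * ε)) := by
    intro x hx
    rw [Finset.mem_filter] at hx
    have h1 : 0 ≤ l * (S x - T * μ - T * ε) := by
      have := hx.2
      have h2 : 0 ≤ S x - (T : ℝ) * μ - T * ε := by linarith
      positivity
    have h2 : (1 : ℝ) ≤ Real.exp (l * (S x - T * μ - T * ε)) := Real.one_le_exp h1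
    have h3 : 0 ≤ ∏ t, D (x t) := Finset.prod_nonneg fun t _ => hDnn (x t)
    nlinarith
  have step2 : ∑ x ∈ Finset.univ.filter (fun x : Fin T → X => (T : ℝ) * μ + T * ε ≤ S x),
      ∏ t, D (x t) ≤
      ∑ x : Fin T → X, (∏ t, D (x t)) * Real.exp (l * (S x - T * μ - T * ε)) := by
    calc ∑ x ∈ Finset.univ.filter (fun x : Fin T → X => (T : ℝ) * μ + T * ε ≤ S x),
        ∏ t, D (x t)
        ≤ ∑ x ∈ Finset.univ.filter (fun x : Fin T → X => (T : ℝ) * μ + T * ε ≤ S x),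
          (∏ t, D (x t)) * Real.exp (l * (S x - T * μ - T * ε)) :=
          Finset.sum_le_sum step1
      _ ≤ ∑ x : Fin T → X, (∏ t, D (x t)) * Real.exp (l * (S x - T * μ - T * ε)) := by
          apply Finset.sum_le_sum_of_subset_of_nonneg (Finset.filter_subset _ _)
          intro x _ _
          have h3 : 0 ≤ ∏ t, D (x t) := Finset.prod_nonneg fun t _ => hDnn (x t)
          positivity
  have step3 : ∀ x : Fin T → X,
      (∏ t, D (x t)) * Real.exp (l * (S x - T * μ - T * ε)) =
      Real.exp (-(l * T * ε)) * ∏ t, D (x t) * Real.exp (l * (Y (x t) - μ)) := by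
    intro x
    rw [Finset.prod_mul_distrib]
    rw [← Real.exp_sum]
    have harg : ∑ t, l * (Y (x t) - μ) = l * (S x - T * μ) := by
      simp only [mul_sub, Finset.sum_sub_distrib, Finset.sum_const, Finset.card_univ,
        Fintype.card_fin, nsmul_eq_mul, hS' x, Finset.mul_sum]
      ring
    rw [harg]
    rw [show l * (S x - (T:ℝ) * μ - T * ε) = -(l * T * ε) + l * (S x - T * μ) by ring,
      Real.exp_add]
    ring
  have step4 : ∑ x : Fin T → X, ∏ t, D (x t) * Real.exp (l * (Y (x t) - μ)) =
      ∏ t : Fin T, ∑ x' : X, D x' * Real.exp (l * (Y x' - μ)) := by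
    rw [Finset.prod_univ_sum]
    rw [Fintype.piFinset_univ]
  have step5 : ∏ t : Fin T, ∑ x' : X, D x' * Real.exp (l * (Y x' - μ)) ≤
      Real.exp ((T : ℝ) * (l ^ 2 * b ^ 2 / 8)) := by
    calc ∏ t : Fin T, ∑ x' : X, D x' * Real.exp (l * (Y x' - μ))
        ≤ ∏ t : Fin T, Real.exp (l ^ 2 * b ^ 2 / 8) := by
          apply Finset.prod_le_prod
          · intro t _
            exact Finset.sum_nonneg fun x _ => mul_nonneg (hDnn x) (Real.exp_pos _).le
          · intro t _
            have := hoeffding_mgf D hDnn hDsum b hb Y hY0 hY1 l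
            rw [← hμ] at this
            exact this
      _ = Real.exp ((T : ℝ) * (l ^ 2 * b ^ 2 / 8)) := by
          rw [Finset.prod_const, ← Real.exp_nat_mul]
          simp
  calc ∑ x ∈ Finset.univ.filter (fun x : Fin T → X => (T : ℝ) * μ + T * ε ≤ S x),
      ∏ t, D (x t)
      ≤ ∑ x : Fin T → X, (∏ t, D (x t)) * Real.exp (l * (S x - T * μ - T * ε)) := step2
    _ = Real.exp (-(l * T * ε)) * ∑ x : Fin T → X, ∏ t, D (x t) * Real.exp (l * (Y (x t) - μ)) := by
        rw [Finset.mul_sum]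
        exact Finset.sum_congr rfl fun x _ => step3 x
    _ ≤ Real.exp (-(l * T * ε)) * Real.exp ((T : ℝ) * (l ^ 2 * b ^ 2 / 8)) := by
        rw [step4]
        exact mul_le_mul_of_nonneg_left step5 (Real.exp_pos _).le
    _ = Real.exp (-2 * T * ε ^ 2 / b ^ 2) := by
        rw [← Real.exp_add]
        congr 1
        rw [hl]
        field_simp
        ring

-- union-bound helpers
lemma sum_union_le_of_nonneg {α : Type*} [DecidableEq α] (A B : Finset α) (f : α → ℝ)
    (hf : ∀ x, 0 ≤ f x) : ∑ x ∈ A ∪ B, f x ≤ ∑ x ∈ A, f x + ∑ x ∈ B, f x := by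
  rw [← Finset.sum_union_inter]
  have : 0 ≤ ∑ x ∈ A ∩ B, f x := Finset.sum_nonneg fun x _ => hf x
  linarith

lemma sum_biUnion_le_of_nonneg {ι α : Type*} [DecidableEq α] (s : Finset ι)
    (t : ι → Finset α) (f : α → ℝ) (hf : ∀ x, 0 ≤ f x) :
    ∑ x ∈ s.biUnion t, f x ≤ ∑ i ∈ s, ∑ x ∈ t i, f x := by
  classical
  induction s using Finset.induction_on with
  | empty => simp
  | insert a s' hni ih =>
    rw [Finset.biUnion_insert, Finset.sum_insert hni]
    calc ∑ x ∈ t a ∪ s'.biUnion t, f x ≤ ∑ x ∈ t a, f x + ∑ x ∈ s'.biUnion t, f x :=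
          sum_union_le_of_nonneg _ _ f hf
      _ ≤ ∑ x ∈ t a, f x + ∑ i ∈ s', ∑ x ∈ t i, f x := by linarith

theorem occams_razor_generalization_bound
    {X H : Type*} [Fintype X] [Nonempty X] [Fintype H] [Nonempty H]
    (D : X → ℝ) (hDnn : ∀ x, 0 ≤ D x) (hDsum : ∑ x, D x = 1)
    (P_H : H → ℝ) (hPHpos : ∀ h, 0 < P_H h) (hPHsum : ∑ h, P_H h = 1)
    (b : ℝ) (hb : 0 < b)
    (L : X → H → ℝ) (hLnn : ∀ x h, 0 ≤ L x h) (hLb : ∀ x h, L x h ≤ b)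
    (T : ℕ) (hT : 1 ≤ T)
    (δ : ℝ) (hδ0 : 0 < δ) (hδ1 : δ < 1) :
    1 - δ ≤
      ∑ x ∈ Finset.univ.filter (fun x : Fin T → X => ∀ h : H,
          |(∑ x', D x' * L x' h) - (1 / (T : ℝ)) * ∑ t, L (x t) h| ≤
            b * Real.sqrt ((-Real.log (P_H h) + Real.log (2 / δ)) / (2 * T))),
        ∏ t, D (x t) := by
  have hT0 : (0 : ℝ) < T := by exact_mod_cast Nat.lt_of_lt_of_le Nat.zero_lt_one hT
  set μ : H → ℝ := fun h => ∑ x', D x' * L x' h with hμdef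
  set c : H → ℝ := fun h => -Real.log (P_H h) + Real.log (2 / δ) with hcdef
  set ε : H → ℝ := fun h => b * Real.sqrt (c h / (2 * T)) with hεdef
  have hPH1 : ∀ h, P_H h ≤ 1 := by
    intro h
    rw [← hPHsum]
    exact Finset.single_le_sum (fun h' _ => (hPHpos h').le) (Finset.mem_univ h)
  have hc : ∀ h, 0 < c h := by
    intro h
    have h1 : Real.log (P_H h) ≤ 0 := Real.log_nonpos (hPHpos h).le (hPH1 h)
    have h2 : 0 < Real.log (2 / δ) := Real.log_pos (by rw [lt_div_iff₀ hδ0]; linarith)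
    simp only [hcdef]
    linarith
  have hε : ∀ h, 0 < ε h := by
    intro h
    apply mul_pos hb
    exact Real.sqrt_pos.2 (div_pos (hc h) (by positivity))
  have hexp : ∀ h, Real.exp (-2 * T * (ε h) ^ 2 / b ^ 2) = P_H h * (δ / 2) := by
    intro h
    have h1 : (ε h) ^ 2 = b ^ 2 * (c h / (2 * T)) := by
      rw [hεdef]
      rw [mul_pow, Real.sq_sqrt (div_pos (hc h) (by positivity)).le]
    have h2 : -2 * T * (ε h) ^ 2 / b ^ 2 = -c h := by
      rw [h1]
      field_simp
    rw [h2, hcdef]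
    rw [show -(-Real.log (P_H h) + Real.log (2 / δ)) =
      Real.log (P_H h) - Real.log (2 / δ) by ring]
    rw [Real.exp_sub, Real.exp_log (hPHpos h), Real.exp_log (by positivity : (0:ℝ) < 2 / δ)]
    field_simp
  set f : (Fin T → X) → ℝ := fun x => ∏ t, D (x t) with hfdef
  have hfnn : ∀ x, 0 ≤ f x := fun x => Finset.prod_nonneg fun t _ => hDnn (x t)
  -- upper tail for each h
  have hupper : ∀ h : H,
      ∑ x ∈ Finset.univ.filter (fun x : Fin T → X =>
        (T : ℝ) * μ h + T * ε h ≤ ∑ t, L (x t) h), f x ≤ P_H h * (δ / 2) := by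
    intro h
    have := chernoff_upper D hDnn hDsum b hb (fun x' => L x' h)
      (fun x' => hLnn x' h) (fun x' => hLb x' h) T (ε h) (hε h)
    rw [hexp h] at this
    exact this
  -- lower tail for each h
  have hlower : ∀ h : H,
      ∑ x ∈ Finset.univ.filter (fun x : Fin T → X =>
        (∑ t, L (x t) h) ≤ (T : ℝ) * μ h - T * ε h), f x ≤ P_H h * (δ / 2) := by
    intro h
    have hkey := chernoff_upper D hDnn hDsum b hb (fun x' => b - L x' h)
      (fun x' => by show (0:ℝ) ≤ b - L x' h; have := hLb x' h; linarith)
      (fun x' => by show b - L x' h ≤ b; have := hLnn x' h; linarith) T (ε h) (hε h)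
    rw [hexp h] at hkey
    have hμ' : ∑ x', D x' * (b - L x' h) = b - μ h := by
      simp only [mul_sub, Finset.sum_sub_distrib, ← Finset.sum_mul, hDsum, one_mul, hμdef]
    have hfilter : (Finset.univ.filter (fun x : Fin T → X =>
        (∑ t, L (x t) h) ≤ (T : ℝ) * μ h - T * ε h)) =
        (Finset.univ.filter (fun x : Fin T → X =>
        (T : ℝ) * (∑ x', D x' * (b - L x' h)) + T * ε h ≤ ∑ t, (b - L (x t) h))) := by
      apply Finset.filter_congr
      intro x _
      have hsum : ∑ t, (b - L (x t) h) = (T : ℝ) * b - ∑ t, L (x t) h := by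
        rw [Finset.sum_sub_distrib, Finset.sum_const, Finset.card_univ, Fintype.card_fin,
          nsmul_eq_mul]
      rw [hμ', hsum]
      constructor <;> intro hh <;> [nlinarith; nlinarith]
    rw [hfilter]
    exact hkey
  -- total mass is 1
  have htotal : ∑ x : Fin T → X, f x = 1 := by
    simp only [hfdef]
    rw [← Fintype.piFinset_univ, ← Finset.prod_univ_sum]
    simp [hDsum]
  set P : (Fin T → X) → Prop := fun x => ∀ h : H,
      |μ h - (1 / (T : ℝ)) * ∑ t, L (x t) h| ≤ ε h with hPdef
  have hsplit : ∑ x ∈ Finset.univ.filter P, f x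
      + ∑ x ∈ Finset.univ.filter (fun x => ¬ P x), f x = 1 := by
    rw [Finset.sum_filter_add_sum_filter_not, htotal]
  have hbad : ∑ x ∈ Finset.univ.filter (fun x => ¬ P x), f x ≤ δ := by
    have hsub : Finset.univ.filter (fun x => ¬ P x) ⊆
        Finset.univ.biUnion (fun h : H => Finset.univ.filter (fun x : Fin T → X =>
          ε h < |μ h - (1 / (T : ℝ)) * ∑ t, L (x t) h|)) := by
      intro x hx
      rw [Finset.mem_filter] at hx
      have hx2 : ¬ ∀ h : H, |μ h - (1 / (T : ℝ)) * ∑ t, L (x t) h| ≤ ε h := hx.2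
      push_neg at hx2
      obtain ⟨h, hh⟩ := hx2
      rw [Finset.mem_biUnion]
      exact ⟨h, Finset.mem_univ h, Finset.mem_filter.2 ⟨Finset.mem_univ x, hh⟩⟩
    calc ∑ x ∈ Finset.univ.filter (fun x => ¬ P x), f x
        ≤ ∑ x ∈ Finset.univ.biUnion (fun h : H => Finset.univ.filter (fun x : Fin T → X =>
            ε h < |μ h - (1 / (T : ℝ)) * ∑ t, L (x t) h|)), f x :=
          Finset.sum_le_sum_of_subset_of_nonneg hsub (fun x _ _ => hfnn x)
      _ ≤ ∑ h : H, ∑ x ∈ Finset.univ.filter (fun x : Fin T → X =>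
            ε h < |μ h - (1 / (T : ℝ)) * ∑ t, L (x t) h|), f x :=
          sum_biUnion_le_of_nonneg _ _ f hfnn
      _ ≤ ∑ h : H, P_H h * δ := by
          apply Finset.sum_le_sum
          intro h _
          have hsub2 : Finset.univ.filter (fun x : Fin T → X =>
              ε h < |μ h - (1 / (T : ℝ)) * ∑ t, L (x t) h|) ⊆
              (Finset.univ.filter (fun x : Fin T → X =>
                (∑ t, L (x t) h) ≤ (T : ℝ) * μ h - T * ε h)) ∪
              (Finset.univ.filter (fun x : Fin T → X =>
                (T : ℝ) * μ h + T * ε h ≤ ∑ t, L (x t) h)) := by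
            intro x hx
            rw [Finset.mem_filter] at hx
            rcases lt_abs.1 hx.2 with hcase | hcase
            · apply Finset.mem_union_left
              refine Finset.mem_filter.2 ⟨Finset.mem_univ x, ?_⟩
              have hTS : (T : ℝ) * ((1 / (T : ℝ)) * ∑ t, L (x t) h) = ∑ t, L (x t) h := by
                field_simp
              nlinarith
            · apply Finset.mem_union_right
              refine Finset.mem_filter.2 ⟨Finset.mem_univ x, ?_⟩
              have hTS : (T : ℝ) * ((1 / (T : ℝ)) * ∑ t, L (x t) h) = ∑ t, L (x t) h := by
                field_simp
              nlinarith
          calc ∑ x ∈ Finset.univ.filter (fun x : Fin T → X =>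
                ε h < |μ h - (1 / (T : ℝ)) * ∑ t, L (x t) h|), f x
              ≤ ∑ x ∈ ((Finset.univ.filter (fun x : Fin T → X =>
                  (∑ t, L (x t) h) ≤ (T : ℝ) * μ h - T * ε h)) ∪
                (Finset.univ.filter (fun x : Fin T → X =>
                  (T : ℝ) * μ h + T * ε h ≤ ∑ t, L (x t) h))), f x :=
                Finset.sum_le_sum_of_subset_of_nonneg hsub2 (fun x _ _ => hfnn x)
            _ ≤ P_H h * (δ / 2) + P_H h * (δ / 2) := by
                have := sum_union_le_of_nonneg (Finset.univ.filter (fun x : Fin T → X =>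
                  (∑ t, L (x t) h) ≤ (T : ℝ) * μ h - T * ε h))
                  (Finset.univ.filter (fun x : Fin T → X =>
                  (T : ℝ) * μ h + T * ε h ≤ ∑ t, L (x t) h)) f hfnn
                have h1 := hlower h
                have h2 := hupper h
                linarith
            _ = P_H h * δ := by ring
      _ = δ := by rw [← Finset.sum_mul, hPHsum, one_mul]
  -- conclude
  have hgoal : ∑ x ∈ Finset.univ.filter P, f x ≥ 1 - δ := by linarith
  exact hgoal
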